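/- Let L ⊣ R : B → A be an adjunction between small categories with R fully faithful, let J be a Grothendieck topology on B, and let f : Psh(A) → Psh(B) be the induced essential geometric morphism (f_! the left Kan extension of L, f* = precomposition with L, f_* = precomposition with R up to the adjunction). If the canonical map f_* X → f_! X is J-locally surjective for every presheaf X on A, then for every object C of A the natural transformation A(R-, ν_C) : A(R-, C) → A(R-, R(L C)) in Psh(B) is J-locally surjective, where ν is the unit of L ⊣ R; and conversely, if A(R-, ν_C) is J-locally surjective for every C, then f_* X → f_! X is J-locally surjective for every X. -/

import Mathlib

open CategoryTheory CategoryTheory.Limits Opposite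

universe u

noncomputable section

variable {A B : Type u} [SmallCategory A] [SmallCategory B]

/-- Given a reflection `L ⊣ R : B → A` (with `R` fully faithful), the induced essential
geometric morphism `f : Psh(A) → Psh(B)` has `f_* X = R.op ⋙ X` and `f_! X` the left Kan
extension of `X` along `L.op`.  This is the canonical natural transformation
`θ : f_* X ⟶ f_! X`; its component at `b` sends `x ∈ X (R b)` to `x ⊗ ξ_b⁻¹`, where
`ξ` is the (invertible) counit of `L ⊣ R`. -/
def theta (L : A ⥤ B) (R : B ⥤ A) (adj : L ⊣ R) [R.Full] [R.Faithful]
    (X : Aᵒᵖ ⥤ Type u) : (R.op ⋙ X) ⟶ L.op.lan.obj X :=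
  Functor.whiskerLeft R.op (L.op.lanUnit.app X) ≫
    Functor.whiskerRight (NatTrans.op (inv adj.counit)) (L.op.lan.obj X)

namespace ThetaAux

variable (L : A ⥤ B) (X : Aᵒᵖ ⥤ Type u)

/-- The element `x ⊗ g` of `(f_! X)(b)`. -/
def elm {b : B} {c : A} (g : b ⟶ L.obj c) (x : X.obj (op c)) :
    (L.op.lan.obj X).obj (op b) :=
  (L.op.lan.obj X).map g.op ((L.op.lanUnit.app X).app (op c) x)

lemma elm_surjective {b : B} (y : (L.op.lan.obj X).obj (op b)) :
    ∃ (c : A) (g : b ⟶ L.obj c) (x : X.obj (op c)), elm L X g x = y := by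
  obtain ⟨j, x, hx⟩ :=
    Types.jointly_surjective' ((L.op.leftKanExtensionObjIsoColimit X (op b)).hom y)
  refine ⟨j.left.unop, j.hom.unop, x, ?_⟩
  have h2 : (L.op.leftKanExtensionObjIsoColimit X (op b)).inv
      (colimit.ι (CostructuredArrow.proj L.op (op b) ⋙ X) j x) = elm L X j.hom.unop x := by
    have := types_congr_hom (L.op.ι_leftKanExtensionObjIsoColimit_inv X (op b) j) x
    dsimp at this
    rw [this]
    rfl
  rw [← h2, hx]
  exact types_congr_hom (L.op.leftKanExtensionObjIsoColimit X (op b)).hom_inv_id y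

lemma elm_map {b b' : B} {c : A} (f : b' ⟶ b) (g : b ⟶ L.obj c) (x : X.obj (op c)) :
    (L.op.lan.obj X).map f.op (elm L X g x) = elm L X (f ≫ g) x := by
  dsimp [elm]
  rw [← FunctorToTypes.map_comp_apply, ← op_comp]

lemma elm_rel {b : B} {c c' : A} (h : c' ⟶ c) (u : b ⟶ L.obj c') (x : X.obj (op c)) :
    elm L X (u ≫ L.map h) x = elm L X u (X.map h.op x) := by
  dsimp [elm]
  rw [FunctorToTypes.map_comp_apply]
  have := (L.op.lanUnit.app X).naturality_apply h.op x
  dsimp at this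
  rw [this]

end ThetaAux

open ThetaAux

lemma theta_app_eq (L : A ⥤ B) (R : B ⥤ A) (adj : L ⊣ R) [R.Full] [R.Faithful]
    (X : Aᵒᵖ ⥤ Type u) (b : B) (x : X.obj (op (R.obj b))) :
    (theta L R adj X).app (op b) x = elm L X ((inv adj.counit).app b) x := rfl

lemma R_map_inv_counit (L : A ⥤ B) (R : B ⥤ A) (adj : L ⊣ R) [R.Full] [R.Faithful] (b : B) :
    R.map ((inv adj.counit).app b) = adj.unit.app (R.obj b) := by
  have h1 : adj.unit.app (R.obj b) ≫ R.map (adj.counit.app b) = 𝟙 _ :=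
    adj.right_triangle_components b
  have h2 : adj.counit.app b ≫ (inv adj.counit).app b = 𝟙 (L.obj (R.obj b)) := by simp
  calc R.map ((inv adj.counit).app b)
      = (adj.unit.app (R.obj b) ≫ R.map (adj.counit.app b)) ≫
          R.map ((inv adj.counit).app b) := by rw [h1, Category.id_comp]
    _ = adj.unit.app (R.obj b) ≫ R.map (adj.counit.app b ≫ (inv adj.counit).app b) := by
        rw [Category.assoc, R.map_comp]
    _ = adj.unit.app (R.obj b) := by rw [h2]; simp

/-- The comparison `f_!(yoneda C) ⟶ yoneda (L C)`. -/
def comparison (L : A ⥤ B) (C : A) : L.op.lan.obj (yoneda.obj C) ⟶ yoneda.obj (L.obj C) :=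
  Functor.descOfIsLeftKanExtension _ (L.op.lanUnit.app (yoneda.obj C)) _
    { app := fun a => TypeCat.ofHom (fun (u : a.unop ⟶ C) => L.map u)
      naturality := fun a a' h => by
        ext u
        dsimp
        simp }

lemma comparison_elm (L : A ⥤ B) (C : A) {b : B} {c : A} (g : b ⟶ L.obj c)
    (x : (yoneda.obj C).obj (op c)) :
    (comparison L C).app (op b) (elm L (yoneda.obj C) g x) = g ≫ L.map x := by
  dsimp [elm]
  have hnat := (comparison L C).naturality_apply g.op
    ((L.op.lanUnit.app (yoneda.obj C)).app (op c) x)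
  rw [hnat]
  have hfac : L.op.lanUnit.app (yoneda.obj C) ≫ Functor.whiskerLeft L.op (comparison L C) =
      ({ app := fun a => TypeCat.ofHom (fun (u : a.unop ⟶ C) => L.map u)
         naturality := fun a a' h => by
          ext u
          dsimp
          simp } : yoneda.obj C ⟶ L.op ⋙ yoneda.obj (L.obj C)) :=
    Functor.descOfIsLeftKanExtension_fac _ _ _ _
  have := types_congr_hom (congr_app hfac (op c)) x
  dsimp at this ⊢
  rw [this]

/-- The canonical map `f_* X ⟶ f_! X` is `J`-locally surjective for every presheaf `X` on
`A` if and only if `A(R-, ν_C) : A(R-, C) ⟶ A(R-, R(L C))` is `J`-locally surjective for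
every object `C` of `A`, where `ν` is the unit of `L ⊣ R`. -/
theorem theta_locallySurjective_iff_unit_locallySurjective
    (L : A ⥤ B) (R : B ⥤ A) (adj : L ⊣ R) [R.Full] [R.Faithful]
    (J : GrothendieckTopology B) :
    (∀ X : Aᵒᵖ ⥤ Type u, Presheaf.IsLocallySurjective J (theta L R adj X)) ↔
      (∀ C : A, Presheaf.IsLocallySurjective J
        (Functor.whiskerLeft R.op (yoneda.map (adj.unit.app C)))) := by
  constructor
  · intro H C
    constructor
    intro b t
    let t' : b ⟶ L.obj C := R.preimage t
    have ht' : R.map t' = t := R.map_preimage t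
    let y : (L.op.lan.obj (yoneda.obj C)).obj (op b) := elm L (yoneda.obj C) t' (𝟙 C)
    refine J.superset_covering ?_
      (Presheaf.imageSieve_mem J (theta L R adj (yoneda.obj C)) (U := op b) y)
    rintro b' f ⟨x', hx'⟩
    -- x' : R.obj b' ⟶ C
    refine ⟨x', ?_⟩
    have hx'2 : elm L (yoneda.obj C) ((inv adj.counit).app b') x' =
        elm L (yoneda.obj C) (f ≫ t') (𝟙 C) := by
      rw [← elm_map]
      exact hx'
    have hB := congr_arg ((comparison L C).app (op b')) hx'2
    rw [comparison_elm, comparison_elm] at hB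
    -- hB : (inv adj.counit).app b' ≫ L.map x' = (f ≫ t') ≫ L.map (𝟙 C)
    have hB2 : (inv adj.counit).app b' ≫ L.map x' = f ≫ t' := by
      simpa using hB
    have hR := congr_arg R.map hB2
    rw [R.map_comp, R.map_comp, R_map_inv_counit L R adj, ht'] at hR
    have hnat : adj.unit.app (R.obj b') ≫ R.map (L.map x') = x' ≫ adj.unit.app C :=
      (adj.unit.naturality x').symm
    show x' ≫ adj.unit.app C = R.map f ≫ t
    rw [← hnat, hR]
  · intro H X
    constructor
    intro b y
    obtain ⟨c, g, x, rfl⟩ := elm_surjective L X y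
    refine J.superset_covering ?_
      (Presheaf.imageSieve_mem J (Functor.whiskerLeft R.op (yoneda.map (adj.unit.app c)))
        (U := op b) (R.map g))
    rintro b' f ⟨h, hh⟩
    -- h : R.obj b' ⟶ c, hh : h ≫ ν_c = R.map f ≫ R.map g
    have hh2 : h ≫ adj.unit.app c = R.map f ≫ R.map g := hh
    refine ⟨X.map h.op x, ?_⟩
    show elm L X ((inv adj.counit).app b') (X.map h.op x) =
      (L.op.lan.obj X).map f.op (elm L X g x)
    rw [elm_map, ← elm_rel]
    congr 1
    apply R.map_injective
    rw [R.map_comp, R.map_comp, R_map_inv_counit L R adj]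
    rw [← hh2]
    have := adj.unit.naturality h
    dsimp at this
    rw [this]

end
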